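/- arXiv:1705.09834 — 2 statements merged into one kernel-verified Lean document; each statement's English description precedes it below -/
import Mathlib

section
/- Let T be a nonempty well-founded tree, B : E → F an operator between Banach spaces, D a directed set, γ > 0, (e_t)_{t ∈ T.D} ⊆ B_E a weakly null collection, K ⊆ F* weak*-compact, and (f*_t)_{t ∈ MAX(T.D)} ⊆ K such that Re f*_t(Be_s) ≥ γ for all ∅ < s ≤ t ∈ MAX(T.D). Then for every 0 < γ' < γ, ⟨K⟩_{B,γ'}^{o(T)} ≠ ∅. -/
open Ordinal Filter

namespace PaperAUS

/-- A tree on `Λ`: a set of nonempty finite sequences closed under nonempty initial segments. -/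
def IsTree {Λ : Type*} (T : Set (List Λ)) : Prop :=
  [] ∉ T ∧ ∀ s t : List Λ, t ∈ T → s <+: t → s ≠ [] → s ∈ T

/-- The maximal nodes of `T`: those with no proper extension in `T`. -/
def maxNodes {Λ : Type*} (T : Set (List Λ)) : Set (List Λ) :=
  {t ∈ T | ∀ s ∈ T, t <+: s → s = t}

/-- Transfinite derivatives of a tree, removing maximal nodes at each step. -/
noncomputable def derivIter {Λ : Type*} (T : Set (List Λ)) (ξ : Ordinal) : Set (List Λ) :=
  Ordinal.limitRecOn ξ T (fun _ ih => ih \ maxNodes ih)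
    (fun o _ ih => ⋂ ζ : Set.Iio o, ih ζ ζ.2)

/-- The rank `o(T)` of a (well-founded) tree: least `ξ` with `T^ξ = ∅`. -/
noncomputable def treeRank {Λ : Type*} (T : Set (List Λ)) : Ordinal :=
  sInf {ξ | derivIter T ξ = ∅}

/-- `T.D`: the tree of sequences of pairs whose first coordinates form a member of `T`. -/
def TD {Λ : Type*} (T : Set (List Λ)) (D : Type*) : Set (List (Λ × D)) :=
  {l | l.map Prod.fst ∈ T}

/-- `r` is (the order of) a directed set. -/
def IsDirSys {D : Type*} (r : D → D → Prop) : Prop :=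
  (∀ a, r a a) ∧ (∀ a b c, r a b → r b c → r a c) ∧ ∀ a b, ∃ c, r a c ∧ r b c

/-- The filter of eventual sections of a directed order, used to express convergence of nets. -/
def netFilter {D : Type*} (r : D → D → Prop) : Filter D :=
  ⨅ a, Filter.principal {b | r a b}

/-- A collection `(x_t)_{t ∈ T.D}` is weakly null: along every family of immediate successor
nodes, the corresponding net is weakly null. -/
def WeaklyNullColl {Λ D : Type*} {X : Type*} [NormedAddCommGroup X] [NormedSpace ℝ X]
    (T : Set (List Λ)) (r : D → D → Prop) (x : List (Λ × D) → X) : Prop :=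
  ∀ (t : List (Λ × D)) (ζ : Λ), (∀ u : D, t ++ [(ζ, u)] ∈ TD T D) →
    ∀ f : X →L[ℝ] ℝ, Tendsto (fun u : D => f (x (t ++ [(ζ, u)]))) (netFilter r) (nhds 0)

/-- The set `{x_s : ∅ < s ≤ t}` of members of the collection along the branch below `t`. -/
def branchSet {Λ D : Type*} {X : Type*} (x : List (Λ × D) → X) (t : List (Λ × D)) : Set X :=
  {v | ∃ s, s ≠ [] ∧ s <+: t ∧ v = x s}

/-- The `ξ`-asymptotic smoothness modulus `ϱ_ξ(σ, A)` of an operator. -/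
noncomputable def rho {X Y : Type*} [NormedAddCommGroup X] [NormedSpace ℝ X]
    [NormedAddCommGroup Y] [NormedSpace ℝ Y] (ξ : Ordinal) (A : X →L[ℝ] Y) (σ : ℝ) : ℝ :=
  sSup {ρ : ℝ | ∃ (Λ D : Type) (r : D → D → Prop) (T : Set (List Λ))
    (y : Y) (x : List (Λ × D) → X),
    Nonempty D ∧ IsDirSys r ∧ IsTree T ∧ treeRank T = omega0 ^ ξ ∧
    ‖y‖ ≤ 1 ∧ (∀ t ∈ TD T D, ‖x t‖ ≤ σ) ∧ WeaklyNullColl T r x ∧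
    ρ = sInf {c : ℝ | ∃ t ∈ TD T D, ∃ v ∈ convexHull ℝ (branchSet x t), c = ‖y + A v‖ - 1}}

end PaperAUS
open Ordinal
namespace PaperAUS

/-- Szlenk derivation: points of `K` every weak*-neighborhood of which has
norm-diameter greater than `ε`. -/
def szDeriv {X : Type*} [NormedAddCommGroup X] [NormedSpace ℝ X]
    (K : Set (WeakDual ℝ X)) (ε : ℝ) : Set (WeakDual ℝ X) :=
  {x ∈ K | ∀ V ∈ nhds x, ∃ y ∈ V ∩ K, ∃ z ∈ V ∩ K,
    ε < ‖WeakDual.toStrongDual y - WeakDual.toStrongDual z‖}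

/-- The `B`-relative Szlenk-type derivation `⟨K⟩_{B,ε}`. -/
def szDerivB {E F : Type*} [NormedAddCommGroup E] [NormedSpace ℝ E]
    [NormedAddCommGroup F] [NormedSpace ℝ F] (B : E →L[ℝ] F)
    (K : Set (WeakDual ℝ F)) (ε : ℝ) : Set (WeakDual ℝ F) :=
  {f ∈ K | ∀ V ∈ nhds f, ∃ g ∈ V ∩ K, ∃ h ∈ V ∩ K,
    ε < ‖(WeakDual.toStrongDual g).comp B - (WeakDual.toStrongDual h).comp B‖}

/-- Transfinite iterates `⟨K⟩_{B,ε}^ξ`. -/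
noncomputable def szDerivBIter {E F : Type*} [NormedAddCommGroup E] [NormedSpace ℝ E]
    [NormedAddCommGroup F] [NormedSpace ℝ F] (B : E →L[ℝ] F)
    (K : Set (WeakDual ℝ F)) (ε : ℝ) (ξ : Ordinal) : Set (WeakDual ℝ F) :=
  Ordinal.limitRecOn ξ K (fun _ ih => szDerivB B ih ε)
    (fun o _ ih => ⋂ ζ : Set.Iio o, ih ζ ζ.2)

end PaperAUS
namespace PaperAUS

/-! ### Auxiliary machinery -/

section IterD

variable {α : Type*}

/-- Generic transfinite iteration of a derivation on sets. -/
noncomputable def iterD (d : Set α → Set α) (S : Set α) (ξ : Ordinal) : Set α :=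
  Ordinal.limitRecOn ξ S (fun _ ih => d ih) (fun o _ ih => ⋂ ζ : Set.Iio o, ih ζ ζ.2)

lemma iterD_zero (d : Set α → Set α) (S : Set α) : iterD d S 0 = S :=
  Ordinal.limitRecOn_zero ..

lemma iterD_succ (d : Set α → Set α) (S : Set α) (ξ : Ordinal) :
    iterD d S (Order.succ ξ) = d (iterD d S ξ) :=
  Ordinal.limitRecOn_succ ..

lemma iterD_limit (d : Set α → Set α) (S : Set α) {o : Ordinal} (ho : Order.IsSuccLimit o) :
    iterD d S o = ⋂ ζ : Set.Iio o, iterD d S ζ :=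
  Ordinal.limitRecOn_limit _ _ _ _ ho

lemma iterD_subset (d : Set α → Set α) (hd : ∀ S, d S ⊆ S) (S : Set α) :
    ∀ ξ, iterD d S ξ ⊆ S := by
  intro ξ
  induction ξ using Ordinal.limitRecOn with
  | zero => rw [iterD_zero]
  | add_one η ih => rw [Ordinal.add_one_eq_succ, iterD_succ]; exact (hd _).trans ih
  | limit o ho ih =>
    rw [iterD_limit d S ho]
    exact (Set.iInter_subset _ ⟨0, ho.pos⟩).trans (ih 0 ho.pos)

lemma iterD_anti (d : Set α → Set α) (hd : ∀ S, d S ⊆ S) (S : Set α) :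
    ∀ ξ, ∀ ζ ≤ ξ, iterD d S ξ ⊆ iterD d S ζ := by
  intro ξ
  induction ξ using Ordinal.limitRecOn with
  | zero => intro ζ hζ; rw [nonpos_iff_eq_zero.mp hζ]
  | add_one η ih =>
    intro ζ hζ
    rw [Ordinal.add_one_eq_succ] at hζ ⊢
    rcases (Order.le_succ_iff_eq_or_le).mp hζ with rfl | h
    · rfl
    · rw [iterD_succ]; exact ((hd _).trans (ih ζ h))
  | limit o ho ih =>
    intro ζ hζ
    rcases eq_or_lt_of_le hζ with rfl | h
    · rfl
    · rw [iterD_limit d S ho]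
      exact Set.iInter_subset (fun i : Set.Iio o => iterD d S i) ⟨ζ, h⟩

universe u

lemma iterD_pres {P : Set α → Prop} (d : Set α → Set α) (S : Set α) (h0 : P S)
    (hd : ∀ S, P S → P (d S))
    (hI : ∀ (o : Ordinal.{u}), Order.IsSuccLimit o → ∀ f : Set.Iio o → Set α,
      (∀ i, P (f i)) → P (⋂ i, f i)) :
    ∀ ξ : Ordinal.{u}, P (iterD d S ξ) := by
  intro ξ
  induction ξ using Ordinal.limitRecOn with
  | zero => rwa [iterD_zero]
  | add_one η ih => rw [Ordinal.add_one_eq_succ, iterD_succ]; exact hd _ ih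
  | limit o ho ih => rw [iterD_limit d S ho]; exact hI o ho _ fun i => ih i i.2

end IterD

section TreeLemmas

variable {Λ : Type*}

/-- Prefix-closedness (for nonempty prefixes). -/
def PC (S : Set (List Λ)) : Prop :=
  ∀ s t : List Λ, t ∈ S → s <+: t → s ≠ [] → s ∈ S

lemma derivIter_eq_iterD (T : Set (List Λ)) (ξ : Ordinal) :
    derivIter T ξ = iterD (fun S => S \ maxNodes S) T ξ := rfl

lemma derivIter_zero (T : Set (List Λ)) : derivIter T 0 = T := iterD_zero _ _

lemma derivIter_succ (T : Set (List Λ)) (ξ : Ordinal) :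
    derivIter T (Order.succ ξ) = derivIter T ξ \ maxNodes (derivIter T ξ) := iterD_succ _ _ _

lemma derivIter_limit (T : Set (List Λ)) {o : Ordinal} (ho : Order.IsSuccLimit o) :
    derivIter T o = ⋂ ζ : Set.Iio o, derivIter T ζ := iterD_limit _ _ ho

lemma derivIter_subset (T : Set (List Λ)) (ξ : Ordinal) : derivIter T ξ ⊆ T :=
  iterD_subset _ (fun _ => Set.diff_subset) T ξ

lemma derivIter_anti (T : Set (List Λ)) {ζ ξ : Ordinal} (h : ζ ≤ ξ) :
    derivIter T ξ ⊆ derivIter T ζ :=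
  iterD_anti _ (fun _ => Set.diff_subset) T ξ ζ h

lemma pc_diff_max {S : Set (List Λ)} (hS : PC S) : PC (S \ maxNodes S) := by
  intro s t ht hpre hs
  refine ⟨hS s t ht.1 hpre hs, fun hmax => ?_⟩
  have hts : t = s := hmax.2 t ht.1 hpre
  exact ht.2 (by rwa [hts])

lemma pc_derivIter {T : Set (List Λ)} (hT : PC T) (ξ : Ordinal) : PC (derivIter T ξ) := by
  rw [derivIter_eq_iterD]
  refine iterD_pres _ _ hT (fun S hS => pc_diff_max hS) ?_ ξ
  intro o ho f hf s t ht hpre hs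
  exact Set.mem_iInter.mpr fun i => hf i s t (Set.mem_iInter.mp ht i) hpre hs

lemma exists_child {S : Set (List Λ)} (hS : PC S) {l w : List Λ} (hw : w ∈ S)
    (hpre : l <+: w) (hne : l ≠ w) : ∃ c, l ++ [c] ∈ S := by
  obtain ⟨tail, rfl⟩ := hpre
  cases tail with
  | nil => exact absurd (by simp) hne
  | cons c rest =>
    refine ⟨c, hS _ _ hw ⟨rest, by simp⟩ (by simp)⟩

universe u

/-- Ordinal rank of a node. -/
noncomputable def rkOf (T : Set (List Λ)) (s : List Λ) : Ordinal.{u} :=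
  sInf {ξ : Ordinal.{u} | s ∉ derivIter T ξ}

lemma rk_not_mem {T : Set (List Λ)} (hTwf : ∃ ξ : Ordinal.{u}, derivIter T ξ = ∅)
    (s : List Λ) : s ∉ derivIter T (rkOf.{u, _} T s) := by
  obtain ⟨ξ₀, hξ₀⟩ := hTwf
  exact csInf_mem (⟨ξ₀, by simp [hξ₀]⟩ : {ξ : Ordinal.{u} | s ∉ derivIter T ξ}.Nonempty)

lemma mem_of_lt_rk {T : Set (List Λ)} {s : List Λ} {η : Ordinal.{u}} (h : η < rkOf.{u, _} T s) :
    s ∈ derivIter T η := by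
  by_contra hc
  exact absurd (csInf_le' (s := {ξ : Ordinal.{u} | s ∉ derivIter T ξ}) hc) (not_le_of_gt h)

lemma stepUp {T : Set (List Λ)} (hT : IsTree T) {η : Ordinal} {s s' : List Λ}
    (h : s' ∈ derivIter T η) (hpre : s <+: s') (hne : s ≠ s') (hs : s ≠ []) :
    s ∈ derivIter T (Order.succ η) := by
  rw [derivIter_succ]
  refine ⟨pc_derivIter hT.2 η s s' h hpre hs, ?_⟩
  rintro ⟨-, hmax⟩
  exact hne (hmax s' h hpre).symm

lemma rk_lt {T : Set (List Λ)} (hT : IsTree T) (hTwf : ∃ ξ : Ordinal.{u}, derivIter T ξ = ∅)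
    {s s' : List Λ} (hs : s ∈ T) (hpre : s <+: s') (hne : s ≠ s') :
    rkOf.{u, _} T s' < rkOf.{u, _} T s := by
  have hsne : s ≠ [] := fun h0 => hT.1 (h0 ▸ hs)
  have key : ∀ ζ : Ordinal.{u}, ζ ≤ rkOf.{u, _} T s' → s ∈ derivIter T ζ := by
    intro ζ
    induction ζ using Ordinal.limitRecOn with
    | zero => intro _; rwa [derivIter_zero]
    | add_one η ih =>
      intro hle
      rw [Ordinal.add_one_eq_succ] at hle ⊢
      exact stepUp hT (mem_of_lt_rk (Order.succ_le_iff.mp hle)) hpre hne hsne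
    | limit o ho ih =>
      intro hle
      rw [derivIter_limit T ho]
      exact Set.mem_iInter.mpr fun ⟨η, hη⟩ => ih η hη (le_of_lt (lt_of_lt_of_le hη hle))
  by_contra hc
  exact rk_not_mem hTwf s (derivIter_anti T (not_lt.mp hc) (key _ le_rfl))

lemma exists_max_ext {T : Set (List Λ)} (hT : IsTree T)
    (hTwf : ∃ ξ : Ordinal.{u}, derivIter T ξ = ∅) :
    ∀ s ∈ T, ∃ t ∈ maxNodes T, s <+: t := by
  have main : ∀ ξ : Ordinal.{u}, ∀ s ∈ T, rkOf.{u, _} T s ≤ ξ →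
      ∃ t ∈ maxNodes T, s <+: t := by
    intro ξ
    induction ξ using Ordinal.induction with
    | h ξ IH =>
      intro s hs hrk
      by_cases hm : s ∈ maxNodes T
      · exact ⟨s, hm, List.prefix_refl s⟩
      · have h2 : ¬ ∀ w ∈ T, s <+: w → w = s := fun hh => hm ⟨hs, hh⟩
        push_neg at h2
        obtain ⟨w, hw, hpw, hwne⟩ := h2
        have hlt := rk_lt hT hTwf hs hpw (Ne.symm hwne)
        obtain ⟨t, ht, hpt⟩ := IH _ (lt_of_lt_of_le hlt hrk) w hw le_rfl
        exact ⟨t, ht, hpw.trans hpt⟩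
  exact fun s hs => main _ s hs le_rfl

variable {D : Type} [Nonempty D]

lemma map_fst_lift (w : List Λ) (u₀ : D) :
    (List.map (fun c => (c, u₀)) w).map Prod.fst = w := by
  simp [List.map_map, Function.comp_def]

lemma max_TD_of_max {T : Set (List Λ)} {t : List (Λ × D)} (ht : t ∈ TD T D)
    (hmax : t.map Prod.fst ∈ maxNodes T) : t ∈ maxNodes (TD T D) := by
  refine ⟨ht, fun s hsTD hpre => ?_⟩
  have h1 : s.map Prod.fst = t.map Prod.fst := hmax.2 _ hsTD (hpre.map Prod.fst)
  have h2 : s.length = t.length := by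
    have := congrArg List.length h1
    simpa using this
  exact ((List.IsPrefix.eq_of_length hpre h2.symm)).symm ▸ rfl

lemma exists_maxTD_ext {T : Set (List Λ)} (hT : IsTree T) (hTne : T.Nonempty)
    (hTwf : ∃ ξ : Ordinal.{u}, derivIter T ξ = ∅) :
    ∀ s : List (Λ × D), (s = [] ∨ s ∈ TD T D) → ∃ t ∈ maxNodes (TD T D), s <+: t := by
  intro s hs
  obtain u₀ : D := Classical.arbitrary D
  have lift : ∀ (s : List (Λ × D)) (w : List Λ), s.map Prod.fst <+: w → w ∈ maxNodes T →
      ∃ t ∈ maxNodes (TD T D), s <+: t := by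
    intro s w hpre hw
    obtain ⟨tail, htail⟩ := hpre
    refine ⟨s ++ tail.map (fun c => (c, u₀)), ?_, ⟨_, rfl⟩⟩
    have hmap : (s ++ tail.map (fun c => (c, u₀))).map Prod.fst = w := by
      rw [List.map_append, map_fst_lift, htail]
    exact max_TD_of_max (show _ ∈ TD T D by rw [TD, Set.mem_setOf_eq, hmap]; exact hw.1)
      (hmap ▸ hw)
  rcases hs with rfl | hsTD
  · obtain ⟨w₀, hw₀⟩ := hTne
    obtain ⟨w, hw, hpw⟩ := exists_max_ext hT hTwf w₀ hw₀
    exact lift [] w (List.nil_prefix) hw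
  · obtain ⟨w, hw, hpw⟩ := exists_max_ext hT hTwf _ hsTD
    exact lift s w hpw hw

end TreeLemmas

section NetLemmas

lemma netFilter_neBot {D : Type*} [Nonempty D] {r : D → D → Prop} (hr : IsDirSys r) :
    (netFilter r).NeBot := by
  refine Filter.iInf_neBot_of_directed ?_ ?_
  · intro a b
    obtain ⟨c, hac, hbc⟩ := hr.2.2 a b
    exact ⟨c, Filter.principal_mono.mpr fun x hx => hr.2.1 a c x hac hx,
      Filter.principal_mono.mpr fun x hx => hr.2.1 b c x hbc hx⟩
  · intro a
    exact Filter.principal_neBot_iff.mpr ⟨a, hr.1 a⟩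

end NetLemmas

section SzLemmas

variable {E F : Type*} [NormedAddCommGroup E] [NormedSpace ℝ E]
  [NormedAddCommGroup F] [NormedSpace ℝ F]

lemma szDerivB_subset (B : E →L[ℝ] F) (K : Set (WeakDual ℝ F)) (ε : ℝ) :
    szDerivB B K ε ⊆ K := fun _ hx => hx.1

lemma szDerivB_isClosed (B : E →L[ℝ] F) {K : Set (WeakDual ℝ F)} (hK : IsClosed K) (ε : ℝ) :
    IsClosed (szDerivB B K ε) := by
  rw [← isOpen_compl_iff] at hK ⊢
  rw [isOpen_iff_mem_nhds] at hK ⊢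
  intro x hx
  by_cases hxK : x ∈ K
  · rw [Set.mem_compl_iff, szDerivB, Set.mem_setOf_eq, not_and] at hx
    have hx2 := hx hxK
    push_neg at hx2
    obtain ⟨V, hV, hV2⟩ := hx2
    obtain ⟨U, hUV, hUo, hxU⟩ := mem_nhds_iff.mp hV
    refine Filter.mem_of_superset (hUo.mem_nhds hxU) ?_
    intro y hyU
    rw [Set.mem_compl_iff, szDerivB, Set.mem_setOf_eq, not_and]
    intro hyK
    push_neg
    refine ⟨U, hUo.mem_nhds hyU, ?_⟩
    intro g hg h hh
    exact hV2 g ⟨hUV hg.1, hg.2⟩ h ⟨hUV hh.1, hh.2⟩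
  · exact Filter.mem_of_superset (hK x hxK) fun y hy hy2 => hy hy2.1

lemma szDerivBIter_eq_iterD (B : E →L[ℝ] F) (K : Set (WeakDual ℝ F)) (ε : ℝ) (ξ : Ordinal) :
    szDerivBIter B K ε ξ = iterD (fun S => szDerivB B S ε) K ξ := rfl

end SzLemmas

/-- a weakly null collection over `T.D` in the unit ball whose branch
functionals stay `≥ γ` forces nonemptiness of the `o(T)`-th `B`-derived set of `K`. -/
theorem szDerivBIter_nonempty_of_branch_estimates {Λ E F : Type*}
    [NormedAddCommGroup E] [NormedSpace ℝ E] [NormedAddCommGroup F] [NormedSpace ℝ F]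
    (T : Set (List Λ)) (hT : IsTree T) (hTne : T.Nonempty)
    (hTwf : ∃ ξ, derivIter T ξ = ∅)
    (B : E →L[ℝ] F) {D : Type} [Nonempty D] (r : D → D → Prop) (hr : IsDirSys r)
    (γ : ℝ) (hγ : 0 < γ) (e : List (Λ × D) → E)
    (he : ∀ t ∈ TD T D, ‖e t‖ ≤ 1) (hwn : WeaklyNullColl T r e)
    (K : Set (WeakDual ℝ F)) (hK : IsCompact K)
    (f : List (Λ × D) → WeakDual ℝ F)
    (hfK : ∀ t ∈ maxNodes (TD T D), f t ∈ K)
    (hlb : ∀ t ∈ maxNodes (TD T D), ∀ s : List (Λ × D), s ≠ [] → s <+: t →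
      γ ≤ f t (B (e s))) :
    ∀ γ' : ℝ, 0 < γ' → γ' < γ → (szDerivBIter B K γ' (treeRank T)).Nonempty := by
  classical
  intro γ' hγ'0 hγ'γ
  have hPC : PC (TD T D) := by
    intro s t ht hpre hs
    exact hT.2 _ _ ht (hpre.map Prod.fst) (by simpa using hs)
  -- the iterated derived sets
  set It : Ordinal → Set (WeakDual ℝ F) := szDerivBIter B K γ' with hIt
  have hstep : ∀ S : Set (WeakDual ℝ F), szDerivB B S γ' ⊆ S := fun S _ hx => hx.1
  have hItK : ∀ ξ, It ξ ⊆ K := fun ξ => by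
    rw [hIt, szDerivBIter_eq_iterD]; exact iterD_subset _ hstep K ξ
  have hItanti : ∀ {ζ ξ : Ordinal}, ζ ≤ ξ → It ξ ⊆ It ζ := fun {ζ ξ} h => by
    rw [hIt, szDerivBIter_eq_iterD, szDerivBIter_eq_iterD]
    exact iterD_anti _ hstep K ξ ζ h
  have hItclosed : ∀ ξ, IsClosed (It ξ) := fun ξ => by
    rw [hIt, szDerivBIter_eq_iterD]
    exact iterD_pres _ K hK.isClosed (fun S hS => szDerivB_isClosed B hS γ')
      (fun _ _ _ hf => isClosed_iInter hf) ξ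
  have hItcomp : ∀ ξ, IsCompact (It ξ) := fun ξ =>
    hK.of_isClosed_subset (hItclosed ξ) (hItK ξ)
  -- branch functional sets
  set Fs : List (Λ × D) → Set (WeakDual ℝ F) :=
    fun s => {h | ∃ t ∈ maxNodes (TD T D), s <+: t ∧ h = f t} with hFs
  have hFsK : ∀ s, Fs s ⊆ K := by
    rintro s h ⟨t, ht, -, rfl⟩; exact hfK t ht
  have hFs_ne : ∀ s, (s = [] ∨ s ∈ TD T D) → (Fs s).Nonempty := by
    intro s hs
    obtain ⟨t, ht, hpt⟩ := exists_maxTD_ext hT hTne hTwf s hs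
    exact ⟨f t, t, ht, hpt, rfl⟩
  have hFs_mono : ∀ {s s' : List (Λ × D)}, s <+: s' → Fs s' ⊆ Fs s := by
    rintro s s' hpre h ⟨t, ht, hpt, rfl⟩
    exact ⟨t, ht, hpre.trans hpt, rfl⟩
  have hFs_gamma : ∀ s : List (Λ × D), s ≠ [] → ∀ h ∈ closure (Fs s), γ ≤ h (B (e s)) := by
    intro s hsne h hcl
    have hclosed : IsClosed {h : WeakDual ℝ F | γ ≤ h (B (e s))} :=
      IsClosed.preimage (WeakDual.eval_continuous (B (e s))) isClosed_Ici
    refine closure_minimal ?_ hclosed hcl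
    rintro h ⟨t, ht, hpt, rfl⟩
    exact hlb t ht s hsne hpt
  -- net filter facts
  set l : Filter D := netFilter r with hldef
  haveI hlne : l.NeBot := netFilter_neBot hr
  -- the Good predicate
  set Good : Ordinal → List (Λ × D) → Prop := fun ξ s =>
    (s = [] ∧ ∀ ζ < ξ, (derivIter T ζ).Nonempty) ∨
    (s ∈ TD T D ∧ s.map Prod.fst ∈ derivIter T ξ) with hGooddef
  -- main transfinite induction
  have main : ∀ ξ : Ordinal, ∀ s : List (Λ × D), Good ξ s →
      (closure (Fs s) ∩ It ξ).Nonempty := by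
    intro ξ
    induction ξ using Ordinal.induction with
    | h ξ IH =>
      intro s hGood
      have hsTD : s = [] ∨ s ∈ TD T D := hGood.imp And.left And.left
      rcases Ordinal.zero_or_succ_or_isSuccLimit ξ with rfl | ⟨η, rfl⟩ | hlim
      · obtain ⟨x, hx⟩ := hFs_ne s hsTD
        refine ⟨x, subset_closure hx, ?_⟩
        rw [hIt, szDerivBIter_eq_iterD, iterD_zero]
        exact hFsK s hx
      · -- successor case
        have hItsucc : It (Order.succ η) = szDerivB B (It η) γ' := by
          rw [hIt, szDerivBIter_eq_iterD, szDerivBIter_eq_iterD, iterD_succ]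
        -- find a child letter
        have hchild : ∃ c : Λ, ∀ u : D,
            (s ++ [(c, u)] ∈ TD T D) ∧ (s ++ [(c, u)]).map Prod.fst ∈ derivIter T η := by
          rcases hGood with ⟨rfl, hne⟩ | ⟨hsTD', hmem⟩
          · obtain ⟨w, hw⟩ := hne η (Order.lt_succ η)
            have hwT : w ∈ T := derivIter_subset T η hw
            have hwne : w ≠ [] := fun h0 => hT.1 (h0 ▸ hwT)
            obtain ⟨c, hc⟩ := exists_child (pc_derivIter hT.2 η) hw (List.nil_prefix)
              (Ne.symm hwne)
            refine ⟨c, fun u => ⟨?_, ?_⟩⟩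
            · show (([] : List (Λ × D)) ++ [(c, u)]).map Prod.fst ∈ T
              simpa using derivIter_subset T η hc
            · simpa using hc
          · have hmem' : s.map Prod.fst ∈ derivIter T η \ maxNodes (derivIter T η) := by
              rwa [derivIter_succ] at hmem
            have h2 : ¬ ∀ w ∈ derivIter T η, s.map Prod.fst <+: w → w = s.map Prod.fst :=
              fun hh => hmem'.2 ⟨hmem'.1, hh⟩
            push_neg at h2
            obtain ⟨w, hw, hpw, hwne⟩ := h2
            obtain ⟨c, hc⟩ := exists_child (pc_derivIter hT.2 η) hw hpw (Ne.symm hwne)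
            refine ⟨c, fun u => ⟨?_, ?_⟩⟩
            · show (s ++ [(c, u)]).map Prod.fst ∈ T
              rw [List.map_append]
              exact derivIter_subset T η (by simpa using hc)
            · rw [List.map_append]; simpa using hc
        obtain ⟨c, hc⟩ := hchild
        have hGu : ∀ u : D, ∃ g, g ∈ closure (Fs (s ++ [(c, u)])) ∩ It η :=
          fun u => IH η (Order.lt_succ η) _ (Or.inr (hc u))
        choose g hg using hGu
        have hgcl : ∀ u, g u ∈ closure (Fs (s ++ [(c, u)])) := fun u => (hg u).1
        have hgIt : ∀ u, g u ∈ It η := fun u => (hg u).2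
        have hmapK : Filter.map g l ≤ Filter.principal K := by
          rw [Filter.le_principal_iff, Filter.mem_map]
          exact Filter.univ_mem' fun u => hItK η (hgIt u)
        obtain ⟨g₀, hg₀K, hclus⟩ := hK.exists_clusterPt hmapK
        have hGsub : ∀ u, g u ∈ closure (Fs s) :=
          fun u => closure_mono (hFs_mono ⟨[(c, u)], rfl⟩) (hgcl u)
        have hg₀Fs : g₀ ∈ closure (Fs s) := by
          have hle : Filter.map g l ≤ Filter.principal (closure (Fs s)) := by
            rw [Filter.le_principal_iff, Filter.mem_map]
            exact Filter.univ_mem' fun u => hGsub u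
          have := hclus.mono hle
          rw [← mem_closure_iff_clusterPt] at this
          rwa [closure_closure] at this
        have hg₀It : g₀ ∈ It η := by
          have hle : Filter.map g l ≤ Filter.principal (It η) := by
            rw [Filter.le_principal_iff, Filter.mem_map]
            exact Filter.univ_mem' fun u => hgIt u
          have := hclus.mono hle
          rw [← mem_closure_iff_clusterPt, (hItclosed η).closure_eq] at this
          exact this
        refine ⟨g₀, hg₀Fs, ?_⟩
        rw [hItsucc]
        refine ⟨hg₀It, fun V hV => ?_⟩
        -- weakly null: g₀ ∘ B is small eventually
        have htend := hwn s c (fun u => (hc u).1) ((WeakDual.toStrongDual g₀).comp B)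
        have hsmall : ∀ᶠ u in l, |g₀ (B (e (s ++ [(c, u)])))| < γ - γ' := by
          have h1 := Metric.tendsto_nhds.mp htend (γ - γ') (by linarith)
          refine h1.mono fun u hu => ?_
          rw [Real.dist_eq] at hu
          simpa using hu
        have hfreq : ∃ᶠ u in l, g u ∈ V := by
          by_contra hcon
          rw [Filter.not_frequently] at hcon
          have hW : Vᶜ ∈ Filter.map g l := Filter.mem_map.mpr hcon
          obtain ⟨y, hy1, hy2⟩ := clusterPt_iff_nonempty.mp hclus hV hW
          exact hy2 hy1
        obtain ⟨u, huV, husm⟩ := (hfreq.and_eventually hsmall).exists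
        refine ⟨g u, ⟨huV, hgIt u⟩, g₀, ⟨mem_of_mem_nhds hV, hg₀It⟩, ?_⟩
        have hγle : γ ≤ (g u) (B (e (s ++ [(c, u)]))) :=
          hFs_gamma _ (by simp) _ (hgcl u)
        have hxle : ‖e (s ++ [(c, u)])‖ ≤ 1 := he _ ((hc u).1)
        set Φ := (WeakDual.toStrongDual (g u)).comp B - (WeakDual.toStrongDual g₀).comp B
          with hΦ
        have hΦx : Φ (e (s ++ [(c, u)])) =
            (g u) (B (e (s ++ [(c, u)]))) - g₀ (B (e (s ++ [(c, u)]))) := rfl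
        have hg₀small : g₀ (B (e (s ++ [(c, u)]))) < γ - γ' :=
          lt_of_le_of_lt (le_abs_self _) husm
        have h1 : γ' < Φ (e (s ++ [(c, u)])) := by rw [hΦx]; linarith
        calc γ' < Φ (e (s ++ [(c, u)])) := h1
          _ ≤ |Φ (e (s ++ [(c, u)]))| := le_abs_self _
          _ ≤ ‖Φ‖ * ‖e (s ++ [(c, u)])‖ := Φ.le_opNorm _
          _ ≤ ‖Φ‖ * 1 := by
              exact mul_le_mul_of_nonneg_left hxle (norm_nonneg Φ)
          _ = ‖Φ‖ := mul_one _
      · -- limit case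
        haveI : Nonempty (Set.Iio ξ) := ⟨⟨0, hlim.pos⟩⟩
        have hGood' : ∀ η : Set.Iio ξ, Good (η : Ordinal) s := by
          intro η
          rcases hGood with ⟨rfl, hne⟩ | ⟨hsTD', hmem⟩
          · exact Or.inl ⟨rfl, fun ζ hζ => hne ζ (hζ.trans η.2)⟩
          · rw [derivIter_limit T hlim] at hmem
            exact Or.inr ⟨hsTD', Set.mem_iInter.mp hmem η⟩
        set Z : Set.Iio ξ → Set (WeakDual ℝ F) := fun η => closure (Fs s) ∩ It η with hZ
        have hZne : ∀ η, (Z η).Nonempty := fun η => IH η η.2 s (hGood' η)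
        have hZclosed : ∀ η, IsClosed (Z η) := fun η =>
          isClosed_closure.inter (hItclosed η)
        have hZcomp : ∀ η, IsCompact (Z η) := fun η =>
          hK.of_isClosed_subset (hZclosed η)
            (Set.inter_subset_right.trans (hItK η))
        have hZdir : Directed (· ⊇ ·) Z := by
          intro a b
          rcases le_total (a : Ordinal) (b : Ordinal) with h | h
          · exact ⟨b, Set.inter_subset_inter_right _ (hItanti h), le_refl _⟩
          · exact ⟨a, le_refl _, Set.inter_subset_inter_right _ (hItanti h)⟩
        obtain ⟨x, hx⟩ :=
          IsCompact.nonempty_iInter_of_directed_nonempty_isCompact_isClosed Z hZdir hZne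
            hZcomp hZclosed
        refine ⟨x, (Set.mem_iInter.mp hx ⟨0, hlim.pos⟩).1, ?_⟩
        rw [hIt, szDerivBIter_eq_iterD, iterD_limit _ _ hlim]
        exact Set.mem_iInter.mpr fun η => (Set.mem_iInter.mp hx η).2
  -- conclude
  have hGoodTop : Good (treeRank T) [] := by
    refine Or.inl ⟨rfl, fun ζ hζ => ?_⟩
    rw [Set.nonempty_iff_ne_empty]
    intro hζe
    exact absurd (csInf_le' (s := {ξ | derivIter T ξ = ∅}) hζe) (not_le_of_gt hζ)
  obtain ⟨x, -, hx2⟩ := main (treeRank T) [] hGoodTop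
  exact ⟨x, hx2⟩


end PaperAUS
end

section
/- Let ξ be an ordinal and T = {(γᵢ)ᵢ₌₁ᵏ : ω^ξ > γ₁ > ⋯ > γ_k} the tree of strictly decreasing finite sequences of ordinals below ω^ξ. Then for every ordinal γ ≤ ω^ξ, the γ-th derived tree satisfies T^γ = {(γᵢ)ᵢ₌₁ᵏ : ω^ξ > γ₁ > ⋯ > γ_k ≥ γ}, and consequently o(T) = ω^ξ. -/
open Ordinal Filter

namespace PaperAUS

/-- The tree of strictly decreasing finite sequences of ordinals below `ω^ξ`. -/
def decTree (ξ : Ordinal) : Set (List Ordinal) :=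
  {l | l ≠ [] ∧ l.Chain' (· > ·) ∧ ∀ a ∈ l, a < omega0 ^ ξ}

/-- In a strictly decreasing list, the last element is the smallest. -/
lemma getLast_le_of_chain' : ∀ (l : List Ordinal), l.Chain' (· > ·) → (hne : l ≠ []) →
    ∀ a ∈ l, l.getLast hne ≤ a
  | [], _, hne => absurd rfl hne
  | [x], _, _ => by simp
  | x :: y :: rest, h, _ => by
    simp only [List.Chain', List.isChain_cons_cons] at h
    intro a ha
    have hgl : (x :: y :: rest).getLast (by simp) = (y :: rest).getLast (by simp) := by
      simp [List.getLast_cons]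
    rcases List.mem_cons.mp ha with rfl | ha
    · rw [hgl]
      exact le_of_lt (lt_of_le_of_lt
        (getLast_le_of_chain' (y :: rest) h.2 (by simp) y (by simp)) h.1)
    · rw [hgl]
      exact getLast_le_of_chain' (y :: rest) h.2 (by simp) a ha

lemma Dset_def (ξ : Ordinal) : ∀ γ, derivIter (decTree ξ) γ =
    {l | l ≠ [] ∧ l.Chain' (· > ·) ∧ ∀ a ∈ l, γ ≤ a ∧ a < omega0 ^ ξ} := by
  intro γ
  induction γ using Ordinal.limitRecOn with
  | zero =>
    rw [derivIter, Ordinal.limitRecOn_zero]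
    ext l
    simp only [decTree, Set.mem_setOf_eq]
    exact ⟨fun ⟨h1, h2, h3⟩ => ⟨h1, h2, fun a ha => ⟨zero_le, h3 a ha⟩⟩,
      fun ⟨h1, h2, h3⟩ => ⟨h1, h2, fun a ha => (h3 a ha).2⟩⟩
  | add_one γ ih =>
    rw [derivIter, Ordinal.limitRecOn_add_one]
    show derivIter (decTree ξ) γ \ maxNodes (derivIter (decTree ξ) γ) = _
    rw [ih]
    ext l
    simp only [Set.mem_diff, Set.mem_setOf_eq, maxNodes, Set.mem_sep_iff, not_and, not_forall]
    constructor
    · rintro ⟨⟨h1, h2, h3⟩, hmax⟩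
      obtain ⟨s, hs, hpre, hne⟩ := hmax ⟨h1, h2, h3⟩
      -- s is a proper extension of l in Dset γ, so l.getLast > γ
      have hlast : γ < l.getLast h1 := by
        rcases hpre with ⟨u, rfl⟩
        have hu : u ≠ [] := by rintro rfl; simp at hne
        have hlt : l.getLast h1 > u.head hu := by
          have := hs.2.1
          simp only [List.Chain', List.isChain_append] at this
          exact this.2.2 _ (List.getLast?_eq_getLast h1) _ (List.head?_eq_head hu)
        exact lt_of_le_of_lt ((hs.2.2 _ (by simp [List.head_mem hu])).1) hlt
      refine ⟨h1, h2, fun a ha => ⟨?_, (h3 a ha).2⟩⟩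
      exact Order.succ_le_of_lt (lt_of_lt_of_le hlast (getLast_le_of_chain' l h2 h1 a ha))
    · rintro ⟨h1, h2, h3⟩
      have h3' : ∀ a ∈ l, γ ≤ a ∧ a < omega0 ^ ξ :=
        fun a ha => ⟨le_of_lt (Order.lt_succ_of_le (le_refl γ) |>.trans_le (h3 a ha).1), (h3 a ha).2⟩
      refine ⟨⟨h1, h2, h3'⟩, fun _ => ⟨l ++ [γ], ?_, ⟨[γ], rfl⟩, by simp⟩⟩
      have hlast : γ < l.getLast h1 := Order.succ_le_iff.mp (h3 _ (List.getLast_mem h1)).1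
      refine ⟨by simp, ?_, ?_⟩
      · simp only [List.Chain', List.isChain_append]
        refine ⟨h2, List.isChain_singleton γ, ?_⟩
        intro x hx y hy
        rw [List.getLast?_eq_getLast h1, Option.mem_some_iff] at hx
        rw [List.head?_cons, Option.mem_some_iff] at hy
        subst hx; subst hy; exact hlast
      · intro a ha
        rcases List.mem_append.mp ha with ha | ha
        · exact h3' a ha
        · simp at ha; subst ha
          exact ⟨le_refl a, hlast.trans (h3 _ (List.getLast_mem h1)).2⟩
  | limit γ hγ ih =>
    rw [derivIter, Ordinal.limitRecOn_limit _ _ _ _ hγ]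
    show ⋂ ζ : Set.Iio γ, derivIter (decTree ξ) ζ = _
    have hrw : ∀ ζ : Set.Iio γ, derivIter (decTree ξ) ζ =
        {l | l ≠ [] ∧ l.Chain' (· > ·) ∧ ∀ a ∈ l, (ζ : Ordinal) ≤ a ∧ a < omega0 ^ ξ} :=
      fun ζ => ih ζ ζ.2
    ext l
    simp only [Set.mem_iInter, hrw, Set.mem_setOf_eq]
    constructor
    · intro h
      have h0 : l ≠ [] ∧ l.Chain' (· > ·) := ⟨(h ⟨0, hγ.bot_lt⟩).1, (h ⟨0, hγ.bot_lt⟩).2.1⟩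
      refine ⟨h0.1, h0.2, fun a ha => ⟨?_, ((h ⟨0, hγ.bot_lt⟩).2.2 a ha).2⟩⟩
      by_contra hc
      push_neg at hc
      exact absurd ((h ⟨Order.succ a, hγ.succ_lt hc⟩).2.2 a ha).1
        (by simp [Order.succ_le_iff])
    · rintro ⟨h1, h2, h3⟩ ζ
      exact ⟨h1, h2, fun a ha => ⟨le_trans (le_of_lt ζ.2) (h3 a ha).1, (h3 a ha).2⟩⟩

/-- the derived trees of the decreasing-sequence tree, and its rank `ω^ξ`. -/
theorem derivIter_decTree (ξ : Ordinal) :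
    (∀ γ ≤ omega0 ^ ξ, derivIter (decTree ξ) γ =
      {l | l ≠ [] ∧ l.Chain' (· > ·) ∧ ∀ a ∈ l, γ ≤ a ∧ a < omega0 ^ ξ}) ∧
    treeRank (decTree ξ) = omega0 ^ ξ := by
  refine ⟨fun γ _ => Dset_def ξ γ, ?_⟩
  have hmem : derivIter (decTree ξ) (omega0 ^ ξ) = ∅ := by
    rw [Dset_def]
    ext l
    simp only [Set.mem_setOf_eq, Set.mem_empty_iff_false, iff_false]
    rintro ⟨h1, _, h3⟩
    exact absurd ((h3 _ (List.getLast_mem h1)).1.trans_lt (h3 _ (List.getLast_mem h1)).2)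
      (lt_irrefl _)
  refine le_antisymm (csInf_le' hmem) (le_csInf ⟨_, hmem⟩ fun β hβ => ?_)
  by_contra hc
  push_neg at hc
  have : [β] ∈ derivIter (decTree ξ) β := by
    rw [Dset_def]
    exact ⟨by simp, List.isChain_singleton β, by simp [le_refl, hc]⟩
  rw [Set.mem_setOf_eq] at hβ
  rw [hβ] at this
  exact this

end PaperAUS
end
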